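/- arXiv:2008.12131 — 2 statements merged into one kernel-verified Lean document; each statement's English description precedes it below -/
import Mathlib

section
/- Let s ≥ 2 be an integer and let T be a finite tree in which every vertex has degree at most s. For every pair of distinct original vertices u, w of T, the sum over all neighbors x of w in V_s(T) of the shortest-path distance in V_s(T) between u and x equals 3s·d_T(u,w) + s − 2, where d_T(u,w) is the shortest-path distance between u and w in T. -/
open SimpleGraph Finset

section VicsekDefs

variable {V : Type} [Fintype V] [DecidableEq V]

/-- Vertex type of the Vicsek graph `V_s(T)`: the original vertices of `T`,
one subdivision vertex `(u, v)` for every ordered adjacent pair (the one closer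
to `u` on the subdivided edge `uv`), and `s - deg v` pendant vertices attached
to each original vertex `v`. -/
abbrev VicsekVert (s : ℕ) (T : SimpleGraph V) [DecidableRel T.Adj] : Type :=
  V ⊕ ({p : V × V // T.Adj p.1 p.2} ⊕ (v : V) × Fin (s - T.degree v))

/-- Base relation generating the adjacency of the Vicsek graph. -/
def vicsekRel (s : ℕ) (T : SimpleGraph V) [DecidableRel T.Adj] :
    VicsekVert s T → VicsekVert s T → Bool
  | Sum.inl u, Sum.inr (Sum.inl ⟨(a, _), _⟩) => u == a
  | Sum.inl u, Sum.inr (Sum.inr ⟨v, _⟩) => u == v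
  | Sum.inr (Sum.inl ⟨(a, b), _⟩), Sum.inr (Sum.inl ⟨(c, d), _⟩) => a == d && b == c
  | _, _ => false

/-- The Vicsek operation `V_s` applied to a graph `T` whose degrees are at most `s`:
every edge `uv` of `T` is subdivided by inserting two new vertices (so that `u` and `v`
are joined by a path of length 3) and `s - deg v` new pendant vertices are attached to
each original vertex `v`. -/
def vicsekGraph (s : ℕ) (T : SimpleGraph V) [DecidableRel T.Adj] :
    SimpleGraph (VicsekVert s T) :=
  SimpleGraph.fromRel (fun x y => vicsekRel s T x y = true)

instance (s : ℕ) (T : SimpleGraph V) [DecidableRel T.Adj] :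
    DecidableRel (vicsekGraph s T).Adj := fun x y =>
  decidable_of_iff _ (SimpleGraph.fromRel_adj _ x y).symm

end VicsekDefs

/-- The Wiener index of a finite graph: the sum of the shortest-path distances over
all unordered pairs of distinct vertices. -/
noncomputable def wienerIndex {W : Type} [Fintype W] (G : SimpleGraph W) : ℕ :=
  (∑ u, ∑ v, G.dist u v) / 2

/-- A bundled finite simple graph with decidable equality and adjacency. -/
structure FinSimpleGraph where
  V : Type
  [fintypeV : Fintype V]
  [decEqV : DecidableEq V]
  G : SimpleGraph V
  [decAdj : DecidableRel G.Adj]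

attribute [instance] FinSimpleGraph.fintypeV FinSimpleGraph.decEqV FinSimpleGraph.decAdj

/-- One application of the Vicsek operation to a bundled finite graph. -/
def vicsekStep (s : ℕ) (X : FinSimpleGraph) : FinSimpleGraph where
  V := VicsekVert s X.G
  G := vicsekGraph s X.G

/-- The `t`-fold iterate `V_s^t` of the Vicsek operation, with `V_s^0 (T) = T`. -/
def vicsekIter (s : ℕ) : ℕ → FinSimpleGraph → FinSimpleGraph
  | 0, X => X
  | t + 1, X => vicsekStep s (vicsekIter s t X)

section Aux
variable {V : Type} [Fintype V] [DecidableEq V] (s : ℕ) (T : SimpleGraph V) [DecidableRel T.Adj]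

lemma vicsek_adj_iff (x y : VicsekVert s T) :
    (vicsekGraph s T).Adj x y ↔ x ≠ y ∧ (vicsekRel s T x y = true ∨ vicsekRel s T y x = true) :=
  SimpleGraph.fromRel_adj _ x y

lemma adj_inl_sub (a : V) (p : {p : V × V // T.Adj p.1 p.2}) :
    (vicsekGraph s T).Adj (Sum.inl a) (Sum.inr (Sum.inl p)) ↔ a = p.1.1 := by
  obtain ⟨⟨c, d⟩, h⟩ := p
  simp [vicsek_adj_iff, vicsekRel]

lemma adj_inl_pend (a : V) (q : (v : V) × Fin (s - T.degree v)) :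
    (vicsekGraph s T).Adj (Sum.inl a) (Sum.inr (Sum.inr q)) ↔ a = q.1 := by
  obtain ⟨v, i⟩ := q
  simp [vicsek_adj_iff, vicsekRel]

lemma not_adj_inl_inl (a b : V) :
    ¬ (vicsekGraph s T).Adj (Sum.inl a) (Sum.inl b) := by
  simp [vicsek_adj_iff, vicsekRel]

lemma adj_sub_sub (p q : {p : V × V // T.Adj p.1 p.2}) :
    (vicsekGraph s T).Adj (Sum.inr (Sum.inl p)) (Sum.inr (Sum.inl q)) ↔
      p.1.1 = q.1.2 ∧ p.1.2 = q.1.1 := by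
  obtain ⟨⟨a, b⟩, h⟩ := p
  obtain ⟨⟨c, d⟩, h'⟩ := q
  simp only [vicsek_adj_iff, vicsekRel, Bool.and_eq_true, beq_iff_eq]
  constructor
  · rintro ⟨-, ⟨rfl, rfl⟩ | ⟨rfl, rfl⟩⟩ <;> exact ⟨rfl, rfl⟩
  · rintro ⟨rfl, rfl⟩
    refine ⟨?_, Or.inl ⟨rfl, rfl⟩⟩
    intro hcontra
    rw [Sum.inr.injEq, Sum.inl.injEq, Subtype.mk.injEq, Prod.mk.injEq] at hcontra
    exact T.loopless.irrefl _ (hcontra.1 ▸ h)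

lemma not_adj_sub_pend (p : {p : V × V // T.Adj p.1 p.2}) (q : (v : V) × Fin (s - T.degree v)) :
    ¬ (vicsekGraph s T).Adj (Sum.inr (Sum.inl p)) (Sum.inr (Sum.inr q)) := by
  obtain ⟨⟨a, b⟩, h⟩ := p; obtain ⟨v, i⟩ := q
  simp [vicsek_adj_iff, vicsekRel]

noncomputable def fd (u : V) : VicsekVert s T → ℕ
  | Sum.inl v => 3 * T.dist u v
  | Sum.inr (Sum.inl p) => min (3 * T.dist u p.1.1 + 1) (3 * T.dist u p.1.2 + 2)
  | Sum.inr (Sum.inr q) => 3 * T.dist u q.1 + 1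

lemma dist_adj_le (hc : T.Connected) {a b : V} (h : T.Adj a b) (u : V) :
    T.dist u a ≤ T.dist u b + 1 := by
  have h1 : T.dist b a = 1 := SimpleGraph.dist_eq_one_iff_adj.2 h.symm
  have := hc.dist_triangle (u := u) (v := b) (w := a)
  omega

lemma fd_lip (hc : T.Connected) (u : V) {x y : VicsekVert s T}
    (hxy : (vicsekGraph s T).Adj x y) : fd s T u y ≤ fd s T u x + 1 := by
  rcases x with a | (⟨⟨a, b⟩, hab⟩ | ⟨v, i⟩) <;> rcases y with c | (⟨⟨c, d⟩, hcd⟩ | ⟨w, j⟩)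
  · exact absurd hxy (not_adj_inl_inl s T a c)
  · rw [adj_inl_sub] at hxy
    subst hxy
    simp only [fd]
    omega
  · rw [adj_inl_pend] at hxy
    subst hxy
    simp only [fd]
    omega
  · rw [← vicsekGraph s T |>.adj_comm, adj_inl_sub] at hxy
    subst hxy
    have : T.dist u c ≤ T.dist u b + 1 := dist_adj_le T hc hab u
    show 3 * T.dist u c ≤ min (3 * T.dist u c + 1) (3 * T.dist u b + 2) + 1
    omega
  · rw [adj_sub_sub] at hxy
    obtain ⟨h1, h2⟩ := hxy
    simp only at h1 h2
    subst h1; subst h2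
    simp only [fd]
    omega
  · exact absurd hxy (not_adj_sub_pend s T _ _)
  · rw [← vicsekGraph s T |>.adj_comm, adj_inl_pend] at hxy
    subst hxy
    simp only [fd]
    omega
  · exact absurd ((vicsekGraph s T).adj_comm .. |>.mp hxy) (not_adj_sub_pend s T _ _)
  · exfalso
    rw [vicsek_adj_iff] at hxy
    obtain ⟨-, h | h⟩ := hxy <;> simp [vicsekRel] at h

lemma fd_le_of_walk (hc : T.Connected) (u : V) {x y : VicsekVert s T}
    (p : (vicsekGraph s T).Walk x y) : fd s T u y ≤ fd s T u x + p.length := by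
  induction p with
  | nil => simp
  | cons h q ih =>
    have := fd_lip s T hc u h
    simp only [SimpleGraph.Walk.length_cons]
    omega

def liftWalk : ∀ {a b : V}, T.Walk a b → (vicsekGraph s T).Walk (Sum.inl a) (Sum.inl b)
  | _, _, SimpleGraph.Walk.nil => SimpleGraph.Walk.nil
  | a, b, @SimpleGraph.Walk.cons _ _ _ c _ h p =>
      SimpleGraph.Walk.cons ((adj_inl_sub s T a ⟨(a, c), h⟩).2 rfl)
        (SimpleGraph.Walk.cons ((adj_sub_sub s T ⟨(a, c), h⟩ ⟨(c, a), h.symm⟩).2 ⟨rfl, rfl⟩)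
          (SimpleGraph.Walk.cons (((adj_inl_sub s T c ⟨(c, a), h.symm⟩).2 rfl).symm)
            (liftWalk p)))

lemma liftWalk_length : ∀ {a b : V} (p : T.Walk a b), (liftWalk s T p).length = 3 * p.length
  | _, _, SimpleGraph.Walk.nil => rfl
  | a, b, SimpleGraph.Walk.cons h p => by
      simp only [liftWalk, SimpleGraph.Walk.length_cons, liftWalk_length p]
      omega

lemma dist_inl_inl (hc : T.Connected) (u w : V) :
    (vicsekGraph s T).dist (Sum.inl u) (Sum.inl w) = 3 * T.dist u w := by
  obtain ⟨p, hp⟩ := hc.exists_walk_length_eq_dist u w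
  apply le_antisymm
  · have := SimpleGraph.dist_le (liftWalk s T p)
    rwa [liftWalk_length, hp] at this
  · have hr : (vicsekGraph s T).Reachable (Sum.inl u) (Sum.inl w) := ⟨liftWalk s T p⟩
    obtain ⟨q, hq⟩ := hr.exists_walk_length_eq_dist
    have h0 := fd_le_of_walk s T hc u q
    have h1 : fd s T u (Sum.inl u) = 0 := by simp [fd]
    have h2 : fd s T u (Sum.inl w) = 3 * T.dist u w := rfl
    omega

lemma dist_inl_sub (hc : T.Connected) (u : V) (p : {p : V × V // T.Adj p.1 p.2}) :
    (vicsekGraph s T).dist (Sum.inl u) (Sum.inr (Sum.inl p)) =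
      min (3 * T.dist u p.1.1 + 1) (3 * T.dist u p.1.2 + 2) := by
  obtain ⟨⟨a, b⟩, hab⟩ := p
  show (vicsekGraph s T).dist (Sum.inl u) (Sum.inr (Sum.inl ⟨(a, b), hab⟩)) =
      min (3 * T.dist u a + 1) (3 * T.dist u b + 2)
  obtain ⟨p1, hp1⟩ := hc.exists_walk_length_eq_dist u a
  obtain ⟨p2, hp2⟩ := hc.exists_walk_length_eq_dist u b
  have d1 : (vicsekGraph s T).dist (Sum.inl u) (Sum.inr (Sum.inl ⟨(a, b), hab⟩)) ≤
      3 * T.dist u a + 1 := by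
    have := SimpleGraph.dist_le
      ((liftWalk s T p1).concat ((adj_inl_sub s T a ⟨(a, b), hab⟩).2 rfl))
    simpa [SimpleGraph.Walk.length_concat, liftWalk_length, hp1] using this
  have d2 : (vicsekGraph s T).dist (Sum.inl u) (Sum.inr (Sum.inl ⟨(a, b), hab⟩)) ≤
      3 * T.dist u b + 2 := by
    have := SimpleGraph.dist_le
      (((liftWalk s T p2).concat ((adj_inl_sub s T b ⟨(b, a), hab.symm⟩).2 rfl)).concat
        ((adj_sub_sub s T ⟨(b, a), hab.symm⟩ ⟨(a, b), hab⟩).2 ⟨rfl, rfl⟩))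
    simp only [SimpleGraph.Walk.length_concat, liftWalk_length, hp2] at this
    omega
  apply le_antisymm
  · omega
  · have hr : (vicsekGraph s T).Reachable (Sum.inl u) (Sum.inr (Sum.inl ⟨(a, b), hab⟩)) :=
      ⟨(liftWalk s T p1).concat ((adj_inl_sub s T a ⟨(a, b), hab⟩).2 rfl)⟩
    obtain ⟨q, hq⟩ := hr.exists_walk_length_eq_dist
    have h0 := fd_le_of_walk s T hc u q
    have h1 : fd s T u (Sum.inl u) = 0 := by simp [fd]
    have h2 : fd s T u (Sum.inr (Sum.inl ⟨(a, b), hab⟩)) =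
        min (3 * T.dist u a + 1) (3 * T.dist u b + 2) := rfl
    omega

lemma dist_inl_pend (hc : T.Connected) (u : V) (q : (v : V) × Fin (s - T.degree v)) :
    (vicsekGraph s T).dist (Sum.inl u) (Sum.inr (Sum.inr q)) = 3 * T.dist u q.1 + 1 := by
  obtain ⟨v, i⟩ := q
  show (vicsekGraph s T).dist (Sum.inl u) (Sum.inr (Sum.inr ⟨v, i⟩)) = 3 * T.dist u v + 1
  obtain ⟨p1, hp1⟩ := hc.exists_walk_length_eq_dist u v
  have d1 : (vicsekGraph s T).dist (Sum.inl u) (Sum.inr (Sum.inr ⟨v, i⟩)) ≤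
      3 * T.dist u v + 1 := by
    have := SimpleGraph.dist_le
      ((liftWalk s T p1).concat ((adj_inl_pend s T v ⟨v, i⟩).2 rfl))
    simpa [SimpleGraph.Walk.length_concat, liftWalk_length, hp1] using this
  apply le_antisymm
  · exact d1
  · have hr : (vicsekGraph s T).Reachable (Sum.inl u) (Sum.inr (Sum.inr ⟨v, i⟩)) :=
      ⟨(liftWalk s T p1).concat ((adj_inl_pend s T v ⟨v, i⟩).2 rfl)⟩
    obtain ⟨q, hq⟩ := hr.exists_walk_length_eq_dist
    have h0 := fd_le_of_walk s T hc u q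
    have h1 : fd s T u (Sum.inl u) = 0 := by simp [fd]
    have h2 : fd s T u (Sum.inr (Sum.inr ⟨v, i⟩)) = 3 * T.dist u v + 1 := rfl
    omega


lemma path_avoiding (hc : T.Connected) {u w b : V} (hb : T.Adj w b)
    (hd : T.dist u b + 1 = T.dist u w) :
    ∃ r : T.Walk u b, r.IsPath ∧ w ∉ r.support := by
  obtain ⟨q, hq⟩ := hc.exists_walk_length_eq_dist u b
  refine ⟨q.bypass, SimpleGraph.Walk.bypass_isPath q, ?_⟩
  intro hmem
  have hmem' : w ∈ q.support := SimpleGraph.Walk.support_bypass_subset q hmem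
  have h1 : T.dist u w ≤ (q.takeUntil w hmem').length := SimpleGraph.dist_le _
  have h2 : (q.takeUntil w hmem').length ≤ q.length :=
    SimpleGraph.Walk.length_takeUntil_le q hmem'
  omega

lemma exists_unique_closer (hT : T.IsTree) {u w : V} (hne : u ≠ w) :
    ∃! b : V, T.Adj w b ∧ T.dist u b + 1 = T.dist u w := by
  have hc := hT.isConnected
  have hpos : 0 < T.dist u w := hc.pos_dist_of_ne hne
  obtain ⟨p, hp⟩ := hc.exists_walk_length_eq_dist w u
  have hcomm : T.dist w u = T.dist u w := SimpleGraph.dist_comm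
  -- existence
  have hex : ∃ b : V, T.Adj w b ∧ T.dist u b + 1 = T.dist u w := by
    cases p with
    | nil => exact absurd rfl hne
    | cons h q =>
      rename_i b
      refine ⟨b, h, ?_⟩
      have hub : T.dist u b ≤ q.length := by
        have := SimpleGraph.dist_le q.reverse
        simpa [SimpleGraph.Walk.length_reverse] using this
      have hlen : q.length + 1 = T.dist u w := by
        simpa [hcomm] using hp
      have htri : T.dist u w ≤ T.dist u b + 1 := dist_adj_le T hc h u
      omega
  obtain ⟨b, hb⟩ := hex
  refine ⟨b, hb, ?_⟩
  intro b' hb'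
  -- uniqueness
  obtain ⟨r1, hr1, hw1⟩ := path_avoiding T hc hb'.1 hb'.2
  obtain ⟨r2, hr2, hw2⟩ := path_avoiding T hc hb.1 hb.2
  have hp1 : (r1.concat hb'.1.symm).IsPath := by
    rw [← SimpleGraph.Walk.isPath_reverse_iff, SimpleGraph.Walk.reverse_concat]
    exact hr1.reverse.cons (by simpa using hw1)
  have hp2 : (r2.concat hb.1.symm).IsPath := by
    rw [← SimpleGraph.Walk.isPath_reverse_iff, SimpleGraph.Walk.reverse_concat]
    exact hr2.reverse.cons (by simpa using hw2)
  obtain ⟨pw, -, huniq⟩ := hT.existsUnique_path u w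
  have e1 := huniq _ hp1
  have e2 := huniq _ hp2
  have := e1.trans e2.symm
  obtain ⟨hv, -⟩ := SimpleGraph.Walk.concat_inj this
  exact hv

end Aux

/-- For distinct original vertices `u, w` of `T`, the sum over the
neighbors `x` of `w` in `V_s(T)` of the distance from `u` to `x` in `V_s(T)` equals
`3·s·d_T(u,w) + s - 2`. -/
theorem vicsekGraph_sum_dist_to_neighbors {V : Type} [Fintype V] [DecidableEq V]
    (s : ℕ) (hs : 2 ≤ s) (T : SimpleGraph V) [DecidableRel T.Adj]
    (hT : T.IsTree) (hdeg : ∀ v : V, T.degree v ≤ s) :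
    ∀ u w : V, u ≠ w →
      (∑ x ∈ (vicsekGraph s T).neighborFinset (Sum.inl w),
          (vicsekGraph s T).dist (Sum.inl u) x) = 3 * s * T.dist u w + s - 2 := by
  intro u w hne
  have hc := hT.isConnected
  set D := T.dist u w with hD
  have hD1 : 1 ≤ D := hc.pos_dist_of_ne hne
  obtain ⟨b₀, ⟨hb₀adj, hb₀d⟩, huniq⟩ := exists_unique_closer T hT hne
  have hmem : b₀ ∈ T.neighborFinset w := by
    rw [SimpleGraph.mem_neighborFinset]; exact hb₀adj
  have hdw : T.degree w ≤ s := hdeg w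
  have hdw1 : 1 ≤ T.degree w := by
    rw [← SimpleGraph.card_neighborFinset_eq_degree]
    exact Finset.card_pos.mpr ⟨b₀, hmem⟩
  rw [SimpleGraph.neighborFinset_eq_filter, Finset.sum_filter]
  rw [Fintype.sum_sum_type, Fintype.sum_sum_type]
  have S1 : (∑ a : V, if (vicsekGraph s T).Adj (Sum.inl w) (Sum.inl a) then
      (vicsekGraph s T).dist (Sum.inl u) (Sum.inl a) else 0) = 0 := by
    simp [not_adj_inl_inl]
  have S3 : (∑ q : (v : V) × Fin (s - T.degree v),
      if (vicsekGraph s T).Adj (Sum.inl w) (Sum.inr (Sum.inr q)) then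
        (vicsekGraph s T).dist (Sum.inl u) (Sum.inr (Sum.inr q)) else 0) =
      (s - T.degree w) * (3 * D + 1) := by
    have key : ∀ q : (v : V) × Fin (s - T.degree v),
        (if (vicsekGraph s T).Adj (Sum.inl w) (Sum.inr (Sum.inr q)) then
          (vicsekGraph s T).dist (Sum.inl u) (Sum.inr (Sum.inr q)) else 0) =
        if w = q.1 then 3 * T.dist u q.1 + 1 else 0 := by
      intro q
      by_cases h : w = q.1
      · rw [if_pos h, if_pos ((adj_inl_pend s T w q).2 h), dist_inl_pend s T hc]
      · rw [if_neg h, if_neg (fun hadj => h ((adj_inl_pend s T w q).1 hadj))]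
    rw [Finset.sum_congr rfl (fun q _ => key q)]
    rw [← Finset.univ_sigma_univ, Finset.sum_sigma]
    have key2 : ∀ v : V,
        (∑ _i : Fin (s - T.degree v), if w = v then 3 * T.dist u v + 1 else 0) =
        if w = v then (s - T.degree v) * (3 * T.dist u v + 1) else 0 := by
      intro v
      by_cases h : w = v <;> simp [h, Finset.sum_const, mul_comm]
    rw [Finset.sum_congr rfl (fun v _ => key2 v), Finset.sum_ite_eq]
    simp [hD]
  have S2 : (∑ p : {p : V × V // T.Adj p.1 p.2},
      if (vicsekGraph s T).Adj (Sum.inl w) (Sum.inr (Sum.inl p)) then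
        (vicsekGraph s T).dist (Sum.inl u) (Sum.inr (Sum.inl p)) else 0) =
      ∑ b ∈ T.neighborFinset w, min (3 * D + 1) (3 * T.dist u b + 2) := by
    have step : ∀ p : {p : V × V // T.Adj p.1 p.2},
        (if (vicsekGraph s T).Adj (Sum.inl w) (Sum.inr (Sum.inl p)) then
          (vicsekGraph s T).dist (Sum.inl u) (Sum.inr (Sum.inl p)) else 0) =
        (fun q : V × V => if w = q.1 then
          min (3 * T.dist u q.1 + 1) (3 * T.dist u q.2 + 2) else 0) p.1 := by
      intro p
      simp only
      by_cases h : w = p.1.1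
      · rw [if_pos h, if_pos ((adj_inl_sub s T w p).2 h), dist_inl_sub s T hc]
      · rw [if_neg h, if_neg (fun hadj => h ((adj_inl_sub s T w p).1 hadj))]
    rw [Finset.sum_congr rfl (fun p _ => step p)]
    rw [← Finset.sum_subtype (Finset.univ.filter (fun q : V × V => T.Adj q.1 q.2))
      (by simp) (fun q : V × V => if w = q.1 then
        min (3 * T.dist u q.1 + 1) (3 * T.dist u q.2 + 2) else 0)]
    rw [Finset.sum_filter, Fintype.sum_prod_type]
    have swap : ∀ a b : V,
        (if T.Adj a b then (if w = a then
          min (3 * T.dist u a + 1) (3 * T.dist u b + 2) else 0) else 0) =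
        if w = a then (if T.Adj a b then
          min (3 * T.dist u a + 1) (3 * T.dist u b + 2) else 0) else 0 := by
      intro a b
      by_cases h1 : T.Adj a b <;> by_cases h2 : w = a <;> simp [h1, h2]
    simp only [swap]
    have pull : ∀ a : V,
        (∑ b : V, if w = a then (if T.Adj a b then
          min (3 * T.dist u a + 1) (3 * T.dist u b + 2) else 0) else 0) =
        if w = a then (∑ b : V, if T.Adj a b then
          min (3 * T.dist u a + 1) (3 * T.dist u b + 2) else 0) else 0 := by
      intro a
      by_cases h : w = a <;> simp [h]
    rw [Finset.sum_congr rfl (fun a _ => pull a), Finset.sum_ite_eq]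
    rw [if_pos (Finset.mem_univ w)]
    rw [SimpleGraph.neighborFinset_eq_filter, Finset.sum_filter, ← hD]
  have S2' : (∑ b ∈ T.neighborFinset w, min (3 * D + 1) (3 * T.dist u b + 2)) =
      (3 * D - 1) + (T.degree w - 1) * (3 * D + 1) := by
    rw [← Finset.add_sum_erase _ _ hmem]
    congr 1
    · omega
    · have key : ∀ b ∈ (T.neighborFinset w).erase b₀,
          min (3 * D + 1) (3 * T.dist u b + 2) = 3 * D + 1 := by
        intro b hbmem
        have hbne : b ≠ b₀ := Finset.ne_of_mem_erase hbmem
        have hadj : T.Adj w b := by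
          have := Finset.mem_of_mem_erase hbmem
          rwa [SimpleGraph.mem_neighborFinset] at this
        have h1 : D ≤ T.dist u b + 1 := dist_adj_le T hc hadj u
        have h2 : ¬(T.dist u b + 1 = D) := fun hcon => hbne (huniq b ⟨hadj, hcon⟩)
        omega
      rw [Finset.sum_congr rfl key, Finset.sum_const, smul_eq_mul,
        Finset.card_erase_of_mem hmem, SimpleGraph.card_neighborFinset_eq_degree]
  rw [S1, S2, S2', S3]
  rw [eq_comm]
  apply Nat.sub_eq_of_eq_add
  obtain ⟨k, hk⟩ := Nat.exists_eq_add_of_le hdw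
  obtain ⟨dg', hdg'⟩ := Nat.exists_eq_add_of_le hdw1
  obtain ⟨D', hD'⟩ := Nat.exists_eq_add_of_le hD1
  have e1 : s - T.degree w = k := by omega
  have e2 : T.degree w - 1 = dg' := by omega
  have e3 : 3 * D - 1 = 3 * D' + 2 := by omega
  rw [e1, e2, e3, hk, hdg', hD']
  ring
end

section
/- Let s ≥ 2 be an integer and let T be a finite tree in which every vertex has degree at most s. For every pair of distinct original vertices u, w of T, the sum over all neighbors x of u and all neighbors y of w in V_s(T) of the shortest-path distance in V_s(T) between x and y equals 3s²·d_T(u,w) + 2s(s−2), where d_T(u,w) is the shortest-path distance between u and w in T. -/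
open SimpleGraph Finset

set_option linter.unusedSectionVars false

namespace VicsekProof

variable {V : Type} [Fintype V] [DecidableEq V] (s : ℕ) (T : SimpleGraph V) [DecidableRel T.Adj]

def svx {a b : V} (h : T.Adj a b) : VicsekVert s T := Sum.inr (Sum.inl ⟨(a, b), h⟩)

def pvx (v : V) (i : Fin (s - T.degree v)) : VicsekVert s T := Sum.inr (Sum.inr ⟨v, i⟩)

variable {s T}

lemma adj_ovx_svx {a b : V} (h : T.Adj a b) :
    (vicsekGraph s T).Adj (Sum.inl a) (svx s T h) := by
  rw [vicsekGraph, SimpleGraph.fromRel_adj]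
  exact ⟨by simp [svx], Or.inl (by simp [vicsekRel, svx])⟩

lemma adj_svx_svx {a b : V} (h : T.Adj a b) :
    (vicsekGraph s T).Adj (svx s T h) (svx s T h.symm) := by
  rw [vicsekGraph, SimpleGraph.fromRel_adj]
  refine ⟨by simp [svx, h.ne], Or.inl (by simp [vicsekRel, svx])⟩

lemma adj_ovx_pvx (v : V) (i : Fin (s - T.degree v)) :
    (vicsekGraph s T).Adj (Sum.inl v) (pvx s T v i) := by
  rw [vicsekGraph, SimpleGraph.fromRel_adj]
  exact ⟨by simp [pvx], Or.inl (by simp [vicsekRel, pvx])⟩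

lemma adj_inl_iff {w : V} {y : VicsekVert s T} :
    (vicsekGraph s T).Adj (Sum.inl w) y ↔
      (∃ d, ∃ h : T.Adj w d, y = svx s T h) ∨ (∃ i, y = pvx s T w i) := by
  constructor
  · intro h
    rw [vicsekGraph, SimpleGraph.fromRel_adj] at h
    obtain ⟨hne, h | h⟩ := h
    · rcases y with v | ⟨⟨⟨a, b⟩, hab⟩ | ⟨v, i⟩⟩
      · simp [vicsekRel] at h
      · simp only [vicsekRel, beq_iff_eq] at h
        subst h
        exact Or.inl ⟨b, hab, rfl⟩
      · simp only [vicsekRel, beq_iff_eq] at h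
        subst h
        exact Or.inr ⟨i, rfl⟩
    · rcases y with v | ⟨⟨⟨a, b⟩, hab⟩ | ⟨v, i⟩⟩ <;> simp [vicsekRel] at h
  · rintro (⟨d, hd, rfl⟩ | ⟨i, rfl⟩)
    · exact adj_ovx_svx hd
    · exact adj_ovx_pvx w i

lemma adj_pvx_iff {w : V} {i : Fin (s - T.degree w)} {y : VicsekVert s T} :
    (vicsekGraph s T).Adj (pvx s T w i) y ↔ y = Sum.inl w := by
  constructor
  · intro h
    rw [vicsekGraph, SimpleGraph.fromRel_adj] at h
    obtain ⟨hne, h | h⟩ := h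
    · rcases y with v | ⟨⟨⟨a, b⟩, hab⟩ | ⟨v, j⟩⟩ <;> simp [vicsekRel, pvx] at h
    · rcases y with v | ⟨⟨⟨a, b⟩, hab⟩ | ⟨v, j⟩⟩
      · simp only [vicsekRel, pvx, beq_iff_eq] at h
        subst h; rfl
      · simp [vicsekRel, pvx] at h
      · simp [vicsekRel, pvx] at h
  · rintro rfl
    exact (adj_ovx_pvx w i).symm

lemma adj_svx_iff {a b : V} {h : T.Adj a b} {y : VicsekVert s T} :
    (vicsekGraph s T).Adj (svx s T h) y ↔ y = Sum.inl a ∨ y = svx s T h.symm := by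
  constructor
  · intro hy
    rw [vicsekGraph, SimpleGraph.fromRel_adj] at hy
    obtain ⟨hne, hy | hy⟩ := hy
    · rcases y with v | ⟨⟨⟨c, d⟩, hcd⟩ | ⟨v, j⟩⟩
      · simp [vicsekRel, svx] at hy
      · simp only [vicsekRel, svx, beq_iff_eq, Bool.and_eq_true] at hy
        obtain ⟨rfl, rfl⟩ := hy
        exact Or.inr (by simp [svx])
      · simp [vicsekRel, svx] at hy
    · rcases y with v | ⟨⟨⟨c, d⟩, hcd⟩ | ⟨v, j⟩⟩
      · simp only [vicsekRel, svx, beq_iff_eq] at hy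
        subst hy; exact Or.inl rfl
      · simp only [vicsekRel, svx, beq_iff_eq, Bool.and_eq_true] at hy
        obtain ⟨rfl, rfl⟩ := hy
        exact Or.inr (by simp [svx])
      · simp [vicsekRel, svx] at hy
  · rintro (rfl | rfl)
    · exact (adj_ovx_svx h).symm
    · exact adj_svx_svx h

lemma vicsek_adj_elim {x y : VicsekVert s T} (h : (vicsekGraph s T).Adj x y) :
    (∃ a b, ∃ hab : T.Adj a b, x = Sum.inl a ∧ y = svx s T hab) ∨
    (∃ a b, ∃ hab : T.Adj a b, y = Sum.inl a ∧ x = svx s T hab) ∨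
    (∃ v i, x = Sum.inl v ∧ y = pvx s T v i) ∨
    (∃ v i, y = Sum.inl v ∧ x = pvx s T v i) ∨
    (∃ a b, ∃ hab : T.Adj a b, x = svx s T hab ∧ y = svx s T hab.symm) := by
  rcases x with v | ⟨⟨⟨a, b⟩, hab⟩ | ⟨v, i⟩⟩
  · rcases adj_inl_iff.1 h with ⟨d, hd, rfl⟩ | ⟨i, rfl⟩
    · exact Or.inl ⟨v, d, hd, rfl, rfl⟩
    · exact Or.inr (Or.inr (Or.inl ⟨v, i, rfl, rfl⟩))
  · rcases (adj_svx_iff (h := hab)).1 h with rfl | rfl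
    · exact Or.inr (Or.inl ⟨a, b, hab, rfl, rfl⟩)
    · exact Or.inr (Or.inr (Or.inr (Or.inr ⟨a, b, hab, rfl, rfl⟩)))
  · have h' : (vicsekGraph s T).Adj (pvx s T v i) y := h
    rw [adj_pvx_iff] at h'
    subst h'
    exact Or.inr (Or.inr (Or.inr (Or.inl ⟨v, i, rfl, rfl⟩)))

-- ## Walk lifting and connectivity

def liftWalk : {v w : V} → T.Walk v w → (vicsekGraph s T).Walk (Sum.inl v) (Sum.inl w)
  | _, _, SimpleGraph.Walk.nil => SimpleGraph.Walk.nil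
  | _, _, SimpleGraph.Walk.cons h p =>
      SimpleGraph.Walk.cons (adj_ovx_svx h)
        (SimpleGraph.Walk.cons (adj_svx_svx h)
          (SimpleGraph.Walk.cons ((adj_ovx_svx h.symm).symm) (liftWalk p)))

lemma liftWalk_length {v w : V} (p : T.Walk v w) :
    (liftWalk (s := s) p).length = 3 * p.length := by
  induction p with
  | nil => rfl
  | cons h q ih =>
      simp only [liftWalk, SimpleGraph.Walk.length_cons, ih]
      ring

lemma vg_connected (hc : T.Connected) : (vicsekGraph s T).Connected := by
  have hanchor : ∀ x : VicsekVert s T, ∃ v, (vicsekGraph s T).Reachable x (Sum.inl v) := by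
    rintro (v | ⟨⟨⟨a, b⟩, hab⟩ | ⟨v, i⟩⟩)
    · exact ⟨v, SimpleGraph.Reachable.refl _⟩
    · exact ⟨a, ((adj_ovx_svx hab).reachable).symm⟩
    · exact ⟨v, ((adj_ovx_pvx v i).reachable).symm⟩
  rw [SimpleGraph.connected_iff]
  refine ⟨fun x y => ?_, ?_⟩
  · obtain ⟨v, hv⟩ := hanchor x
    obtain ⟨w, hw⟩ := hanchor y
    obtain ⟨p⟩ := hc.preconnected v w
    exact hv.trans (((liftWalk (s := s) p).reachable).trans hw.symm)
  · obtain ⟨v⟩ := hc.nonempty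
    exact ⟨Sum.inl v⟩

lemma dist_inl_inl_le (hc : T.Connected) (v w : V) :
    (vicsekGraph s T).dist (Sum.inl v) (Sum.inl w) ≤ 3 * T.dist v w := by
  obtain ⟨p, hp⟩ := (hc v w).exists_walk_length_eq_dist
  calc (vicsekGraph s T).dist (Sum.inl v) (Sum.inl w) ≤ (liftWalk (s := s) p).length :=
        SimpleGraph.dist_le _
    _ = 3 * T.dist v w := by rw [liftWalk_length, hp]

-- ## Lipschitz lower-bound machinery

lemma lip_le_dist {W : Type} {G : SimpleGraph W} (f : W → ℕ) {t : W} (h0 : f t = 0)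
    (hf : ∀ ⦃x y⦄, G.Adj x y → f x ≤ f y + 1) {x : W} (hr : G.Reachable x t) :
    f x ≤ G.dist x t := by
  have key : ∀ {z z' : W} (p : G.Walk z z'), f z ≤ p.length + f z' := by
    intro z z' p
    induction p with
    | nil => simp
    | cons h q ih =>
        rw [SimpleGraph.Walk.length_cons]
        have := hf h
        omega
  obtain ⟨p, hp⟩ := hr.exists_walk_length_eq_dist
  have := key p
  omega

-- ## Tree distance lemmas

lemma tdist_lip (hc : T.Connected) {a b : V} (h : T.Adj a b) (t : V) :
    T.dist a t ≤ T.dist b t + 1 := by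
  have h1 : T.dist a b ≤ 1 := by
    simpa using SimpleGraph.dist_le (SimpleGraph.Walk.cons h SimpleGraph.Walk.nil)
  have := hc.dist_triangle (u := a) (v := b) (w := t)
  omega

lemma exists_geodesic_path (hc : T.Connected) (u v : V) :
    ∃ p : T.Walk u v, p.IsPath ∧ p.length = T.dist u v := by
  obtain ⟨p, hp⟩ := (hc u v).exists_walk_length_eq_dist
  refine ⟨p.bypass, p.bypass_isPath, le_antisymm ?_ (SimpleGraph.dist_le _)⟩
  exact le_trans p.length_bypass_le (le_of_eq hp)

lemma dist_end_le_of_mem_support {a c v : V} {p : T.Walk a c} (hv : v ∈ p.support) :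
    T.dist v c ≤ p.length :=
  le_trans (SimpleGraph.dist_le (p.dropUntil v hv)) (SimpleGraph.Walk.length_dropUntil_le p hv)

lemma dist_start_le_of_mem_support {a c v : V} {p : T.Walk a c} (hv : v ∈ p.support) :
    T.dist a v ≤ p.length :=
  le_trans (SimpleGraph.dist_le (p.takeUntil v hv)) (SimpleGraph.Walk.length_takeUntil_le p hv)

lemma exists_toward (hc : T.Connected) {u w : V} (hne : u ≠ w) :
    ∃ d, ∃ _h : T.Adj w d, T.dist u d + 1 = T.dist u w := by
  obtain ⟨p, hp, hlen⟩ := exists_geodesic_path hc w u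
  cases p with
  | nil => exact absurd rfl hne.symm
  | cons h q =>
      rename_i d
      refine ⟨d, h, ?_⟩
      have h1 : T.dist d u ≤ q.length := SimpleGraph.dist_le q
      have h2 : q.length + 1 = T.dist w u := by
        simpa [SimpleGraph.Walk.length_cons] using hlen
      have h3 : T.dist w u ≤ T.dist d u + 1 := tdist_lip hc h u
      rw [SimpleGraph.dist_comm (u := u) (v := d), SimpleGraph.dist_comm (u := u) (v := w)]
      omega

lemma toward_unique (hT : T.IsTree) {u w d₁ d₂ : V} (hne : u ≠ w)
    (h1 : T.Adj w d₁) (h2 : T.Adj w d₂)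
    (k1 : T.dist u d₁ + 1 = T.dist u w) (k2 : T.dist u d₂ + 1 = T.dist u w) : d₁ = d₂ := by
  have hc := hT.isConnected
  obtain ⟨q₁, hq₁, hl₁⟩ := exists_geodesic_path hc d₁ u
  obtain ⟨q₂, hq₂, hl₂⟩ := exists_geodesic_path hc d₂ u
  have hwq : ∀ (d : V) (q : T.Walk d u), q.length + 1 = T.dist w u → w ∉ q.support := by
    intro d q hq hmem
    have h5 : T.dist w u ≤ q.length := dist_end_le_of_mem_support (p := q) hmem
    omega
  have hd1 : T.dist d₁ u + 1 = T.dist w u := by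
    rw [SimpleGraph.dist_comm (u := d₁), SimpleGraph.dist_comm (u := w)]; omega
  have hd2 : T.dist d₂ u + 1 = T.dist w u := by
    rw [SimpleGraph.dist_comm (u := d₂), SimpleGraph.dist_comm (u := w)]; omega
  have hp1 : (SimpleGraph.Walk.cons h1 q₁).IsPath :=
    hq₁.cons (hwq d₁ q₁ (by omega))
  have hp2 : (SimpleGraph.Walk.cons h2 q₂).IsPath :=
    hq₂.cons (hwq d₂ q₂ (by omega))
  have := (hT.existsUnique_path w u).unique hp1 hp2
  have hsupp := congrArg SimpleGraph.Walk.support this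
  rw [SimpleGraph.Walk.support_cons, SimpleGraph.Walk.support_cons,
    q₁.support_eq_cons, q₂.support_eq_cons] at hsupp
  simp only [List.cons.injEq] at hsupp
  exact hsupp.2.1

lemma away_ge (hc : T.Connected) {u w d : V} (h : T.Adj w d)
    (hnt : ¬ T.dist u d + 1 = T.dist u w) : T.dist u w ≤ T.dist u d := by
  have h1 : T.dist d u ≤ T.dist w u + 1 := tdist_lip hc h.symm u
  have h2 : T.dist w u ≤ T.dist d u + 1 := tdist_lip hc h u
  have e1 : T.dist u d = T.dist d u := SimpleGraph.dist_comm
  have e2 : T.dist u w = T.dist w u := SimpleGraph.dist_comm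
  omega

lemma both_toward_dist (hT : T.IsTree) {u w b d : V} (hub : T.Adj u b) (hwd : T.Adj w d)
    (hD : 2 ≤ T.dist u w) (hb : T.dist b w + 1 = T.dist u w)
    (hd : T.dist u d + 1 = T.dist u w) : T.dist b d + 2 = T.dist u w := by
  have hc := hT.isConnected
  -- lower bound
  have l1 : T.dist u b ≤ 1 := by
    simpa using SimpleGraph.dist_le (SimpleGraph.Walk.cons hub SimpleGraph.Walk.nil)
  have l2 : T.dist d w ≤ 1 := by
    simpa using SimpleGraph.dist_le (SimpleGraph.Walk.cons hwd.symm SimpleGraph.Walk.nil)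
  have l3 : T.dist u w ≤ T.dist u b + T.dist b w := hc.dist_triangle
  have l4 : T.dist b w ≤ T.dist b d + T.dist d w := hc.dist_triangle
  -- upper bound: set up the two paths from u to w
  obtain ⟨q, hq, hlq⟩ := exists_geodesic_path hc b w
  obtain ⟨r, hr, hlr⟩ := exists_geodesic_path hc u d
  have hu_notin_q : u ∉ q.support := by
    intro hmem
    have hx : T.dist u w ≤ q.length := dist_end_le_of_mem_support hmem
    omega
  have hw_notin_r : w ∉ r.support := by
    intro hmem
    have hx : T.dist u w ≤ r.length := dist_start_le_of_mem_support hmem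
    omega
  have hp1 : (SimpleGraph.Walk.cons hub q).IsPath := hq.cons hu_notin_q
  have hp2 : (r.concat hwd.symm).IsPath := by
    rw [← SimpleGraph.Walk.isPath_reverse_iff, SimpleGraph.Walk.reverse_concat]
    exact hr.reverse.cons (by simpa using hw_notin_r)
  have heq := (hT.existsUnique_path u w).unique hp1 hp2
  have hdmem : d ∈ (SimpleGraph.Walk.cons hub q).support := by
    rw [heq, SimpleGraph.Walk.support_concat]
    simp only [List.concat_eq_append, List.mem_append]
    exact Or.inl r.end_mem_support
  have hdne_u : d ≠ u := by
    intro hde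
    subst hde
    simp [SimpleGraph.dist_self] at hd
    omega
  have hdq : d ∈ q.support := by
    rcases (by simpa [SimpleGraph.Walk.support_cons] using hdmem : d = u ∨ d ∈ q.support) with
      he | he
    · exact absurd he hdne_u
    · exact he
  have ht1 : T.dist b d ≤ (q.takeUntil d hdq).length :=
    SimpleGraph.dist_le _
  have ht2 : T.dist d w ≤ (q.dropUntil d hdq).length :=
    SimpleGraph.dist_le _
  have ht3 : (q.takeUntil d hdq).length + (q.dropUntil d hdq).length = q.length := by
    have hx := congrArg SimpleGraph.Walk.length (q.take_spec hdq)
    rw [SimpleGraph.Walk.length_append] at hx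
    exact hx
  have hdw : d ≠ w := by
    intro hde
    subst hde
    rw [SimpleGraph.dist_self] at l2
    omega
  have hpos : 0 < T.dist d w := (hc d w).pos_dist_of_ne hdw
  omega

-- ## Exact distance functions

variable (s T)

/-- candidate distance from `Sum.inl v` to the subdivision vertex `(w,d)`. -/
noncomputable def gfun (w d v : V) : ℕ := min (3 * T.dist v w + 1) (3 * T.dist v d + 2)

/-- candidate distance to the subdivision vertex `(w,d)`. -/
noncomputable def f2 (w d : V) : VicsekVert s T → ℕ := fun x =>
  match x with
  | Sum.inl v => gfun T w d v
  | Sum.inr (Sum.inl p) =>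
      if p.val = (w, d) then 0
      else if p.val = (d, w) then 1
      else min (gfun T w d p.val.1 + 1) (gfun T w d p.val.2 + 2)
  | Sum.inr (Sum.inr q) => gfun T w d q.1 + 1

/-- candidate distance to the pendant vertex `(w,j)`. -/
noncomputable def f3 (w : V) (j : Fin (s - T.degree w)) : VicsekVert s T → ℕ := fun x =>
  match x with
  | Sum.inl v => 3 * T.dist v w + 1
  | Sum.inr (Sum.inl p) => min (3 * T.dist p.val.1 w + 2) (3 * T.dist p.val.2 w + 3)
  | Sum.inr (Sum.inr q) =>
      if q = (⟨w, j⟩ : (v : V) × Fin (s - T.degree v)) then 0 else 3 * T.dist q.1 w + 2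

variable {s T}

lemma f3_lip (hc : T.Connected) (w : V) (j : Fin (s - T.degree w))
    {x y : VicsekVert s T} (h : (vicsekGraph s T).Adj x y) :
    f3 s T w j x ≤ f3 s T w j y + 1 := by
  rcases vicsek_adj_elim h with
    ⟨a, b, hab, rfl, rfl⟩ | ⟨a, b, hab, rfl, rfl⟩ | ⟨v, i, rfl, rfl⟩ | ⟨v, i, rfl, rfl⟩ |
    ⟨a, b, hab, rfl, rfl⟩
  · simp only [f3, svx]
    have := tdist_lip hc hab w
    omega
  · simp only [f3, svx]
    have := tdist_lip hc hab w
    omega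
  · simp only [f3, pvx]
    split_ifs with hq
    · have : v = w := congrArg Sigma.fst hq
      subst this
      simp [SimpleGraph.dist_self]
    · omega
  · simp only [f3, pvx]
    split_ifs with hq
    · omega
    · omega
  · simp only [f3, svx]
    omega

lemma f2_lip (hc : T.Connected) {w d : V} (hwd : T.Adj w d)
    {x y : VicsekVert s T} (h : (vicsekGraph s T).Adj x y) :
    f2 s T w d x ≤ f2 s T w d y + 1 := by
  have hdw1 : T.dist w d = 1 := SimpleGraph.dist_eq_one_iff_adj.2 hwd
  have hdw1' : T.dist d w = 1 := SimpleGraph.dist_eq_one_iff_adj.2 hwd.symm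
  have hne : w ≠ d := hwd.ne
  rcases vicsek_adj_elim h with
    ⟨a, b, hab, rfl, rfl⟩ | ⟨a, b, hab, rfl, rfl⟩ | ⟨v, i, rfl, rfl⟩ | ⟨v, i, rfl, rfl⟩ |
    ⟨a, b, hab, rfl, rfl⟩
  · -- x = inl a, y = svx (a,b)
    simp only [f2, svx, gfun]
    have h1 := tdist_lip hc hab w
    have h2 := tdist_lip hc hab d
    split_ifs with hq1 hq2
    · obtain ⟨rfl, rfl⟩ := Prod.mk.injEq .. ▸ Prod.ext_iff.1 hq1
      simp only [SimpleGraph.dist_self]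
      omega
    · obtain ⟨rfl, rfl⟩ := Prod.ext_iff.1 hq2
      simp only [SimpleGraph.dist_self]
      omega
    · omega
  · -- y = inl a, x = svx (a,b)
    simp only [f2, svx, gfun]
    have h1 := tdist_lip hc hab w
    have h2 := tdist_lip hc hab d
    split_ifs with hq1 hq2
    · omega
    · obtain ⟨rfl, rfl⟩ := Prod.ext_iff.1 hq2
      simp only [SimpleGraph.dist_self]
      omega
    · omega
  · -- x = inl v, y = pvx v i
    simp only [f2, pvx, gfun]
    omega
  · -- y = inl v, x = pvx v i
    simp only [f2, pvx, gfun]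
    omega
  · -- x = svx (a,b), y = svx (b,a)
    simp only [f2, svx, gfun]
    split_ifs with hq1 hq2 hq3 hq4 hq5 hq6 hq7 hq8
    all_goals (try omega)
    all_goals (try (obtain ⟨rfl, rfl⟩ := Prod.ext_iff.1 hq1))
    all_goals (try (obtain ⟨rfl, rfl⟩ := Prod.ext_iff.1 hq2))
    all_goals simp_all [Prod.ext_iff]
    all_goals omega

-- ## Exact distances

lemma dvg_adj_le {x y : VicsekVert s T} (h : (vicsekGraph s T).Adj x y) :
    (vicsekGraph s T).dist x y ≤ 1 := by
  simpa using SimpleGraph.dist_le (SimpleGraph.Walk.cons h SimpleGraph.Walk.nil)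

lemma dist_eq_f2 (hc : T.Connected) {w d : V} (hwd : T.Adj w d) (x : VicsekVert s T) :
    (vicsekGraph s T).dist x (svx s T hwd) = f2 s T w d x := by
  have hvg := vg_connected (s := s) hc

  -- upper bound for original vertices
  have hinl : ∀ v : V, (vicsekGraph s T).dist (Sum.inl v) (svx s T hwd) ≤ gfun T w d v := by
    intro v
    refine le_min ?_ ?_
    · calc (vicsekGraph s T).dist (Sum.inl v) (svx s T hwd)
          ≤ (vicsekGraph s T).dist (Sum.inl v) (Sum.inl w) +
            (vicsekGraph s T).dist (Sum.inl w) (svx s T hwd) := hvg.dist_triangle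
        _ ≤ 3 * T.dist v w + 1 :=
            Nat.add_le_add (dist_inl_inl_le hc v w) (dvg_adj_le (adj_ovx_svx hwd))
    · have h2 : (vicsekGraph s T).dist (Sum.inl d) (svx s T hwd) ≤ 2 :=
        SimpleGraph.dist_le
          (SimpleGraph.Walk.cons (adj_ovx_svx hwd.symm)
            (SimpleGraph.Walk.cons (adj_svx_svx hwd.symm) SimpleGraph.Walk.nil))
      calc (vicsekGraph s T).dist (Sum.inl v) (svx s T hwd)
          ≤ (vicsekGraph s T).dist (Sum.inl v) (Sum.inl d) +
            (vicsekGraph s T).dist (Sum.inl d) (svx s T hwd) := hvg.dist_triangle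
        _ ≤ 3 * T.dist v d + 2 := Nat.add_le_add (dist_inl_inl_le hc v d) h2
  refine le_antisymm ?_ ?_
  · -- upper bound
    rcases x with v | ⟨⟨⟨a, b⟩, hab⟩ | ⟨v, i⟩⟩
    · exact hinl v
    · show (vicsekGraph s T).dist (svx s T hab) (svx s T hwd) ≤ _
      simp only [f2, svx]
      split_ifs with hq1 hq2
      · obtain ⟨rfl, rfl⟩ := Prod.ext_iff.1 hq1
        exact le_of_eq SimpleGraph.dist_self
      · obtain ⟨rfl, rfl⟩ := Prod.ext_iff.1 hq2
        exact dvg_adj_le (adj_svx_svx hab)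
      · refine le_min ?_ ?_
        · calc (vicsekGraph s T).dist (svx s T hab) (svx s T hwd)
              ≤ (vicsekGraph s T).dist (svx s T hab) (Sum.inl a) +
                (vicsekGraph s T).dist (Sum.inl a) (svx s T hwd) := hvg.dist_triangle
            _ ≤ 1 + gfun T w d a := Nat.add_le_add (dvg_adj_le (adj_ovx_svx hab).symm) (hinl a)
            _ = gfun T w d a + 1 := by omega
        · have h2 : (vicsekGraph s T).dist (svx s T hab) (Sum.inl b) ≤ 2 :=
            SimpleGraph.dist_le
              (SimpleGraph.Walk.cons (adj_svx_svx hab)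
                (SimpleGraph.Walk.cons (adj_ovx_svx hab.symm).symm SimpleGraph.Walk.nil))
          calc (vicsekGraph s T).dist (svx s T hab) (svx s T hwd)
              ≤ (vicsekGraph s T).dist (svx s T hab) (Sum.inl b) +
                (vicsekGraph s T).dist (Sum.inl b) (svx s T hwd) := hvg.dist_triangle
            _ ≤ 2 + gfun T w d b := Nat.add_le_add h2 (hinl b)
            _ = gfun T w d b + 2 := by omega
    · show (vicsekGraph s T).dist (pvx s T v i) (svx s T hwd) ≤ _
      simp only [f2, pvx]
      calc (vicsekGraph s T).dist (pvx s T v i) (svx s T hwd)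
          ≤ (vicsekGraph s T).dist (pvx s T v i) (Sum.inl v) +
            (vicsekGraph s T).dist (Sum.inl v) (svx s T hwd) := hvg.dist_triangle
        _ ≤ 1 + gfun T w d v := Nat.add_le_add (dvg_adj_le (adj_ovx_pvx v i).symm) (hinl v)
        _ = gfun T w d v + 1 := by omega
  · -- lower bound
    refine lip_le_dist (f2 s T w d) ?_ (fun x y h => f2_lip hc hwd h) (hvg.preconnected _ _)
    simp [f2, svx]

lemma dist_eq_f3 (hc : T.Connected) (w : V) (j : Fin (s - T.degree w)) (x : VicsekVert s T) :
    (vicsekGraph s T).dist x (pvx s T w j) = f3 s T w j x := by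
  have hvg := vg_connected (s := s) hc

  have hinl : ∀ v : V,
      (vicsekGraph s T).dist (Sum.inl v) (pvx s T w j) ≤ 3 * T.dist v w + 1 := by
    intro v
    calc (vicsekGraph s T).dist (Sum.inl v) (pvx s T w j)
        ≤ (vicsekGraph s T).dist (Sum.inl v) (Sum.inl w) +
          (vicsekGraph s T).dist (Sum.inl w) (pvx s T w j) := hvg.dist_triangle
      _ ≤ 3 * T.dist v w + 1 :=
          Nat.add_le_add (dist_inl_inl_le hc v w) (dvg_adj_le (adj_ovx_pvx w j))
  refine le_antisymm ?_ ?_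
  · rcases x with v | ⟨⟨⟨a, b⟩, hab⟩ | ⟨v, i⟩⟩
    · exact hinl v
    · show (vicsekGraph s T).dist (svx s T hab) (pvx s T w j) ≤ _
      simp only [f3, svx]
      refine le_min ?_ ?_
      · calc (vicsekGraph s T).dist (svx s T hab) (pvx s T w j)
            ≤ (vicsekGraph s T).dist (svx s T hab) (Sum.inl a) +
              (vicsekGraph s T).dist (Sum.inl a) (pvx s T w j) := hvg.dist_triangle
          _ ≤ 1 + (3 * T.dist a w + 1) :=
              Nat.add_le_add (dvg_adj_le (adj_ovx_svx hab).symm) (hinl a)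
          _ = 3 * T.dist a w + 2 := by omega
      · have h2 : (vicsekGraph s T).dist (svx s T hab) (Sum.inl b) ≤ 2 :=
          SimpleGraph.dist_le
            (SimpleGraph.Walk.cons (adj_svx_svx hab)
              (SimpleGraph.Walk.cons (adj_ovx_svx hab.symm).symm SimpleGraph.Walk.nil))
        calc (vicsekGraph s T).dist (svx s T hab) (pvx s T w j)
            ≤ (vicsekGraph s T).dist (svx s T hab) (Sum.inl b) +
              (vicsekGraph s T).dist (Sum.inl b) (pvx s T w j) := hvg.dist_triangle
          _ ≤ 2 + (3 * T.dist b w + 1) := Nat.add_le_add h2 (hinl b)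
          _ = 3 * T.dist b w + 3 := by omega
    · show (vicsekGraph s T).dist (pvx s T v i) (pvx s T w j) ≤ _
      simp only [f3, pvx]
      split_ifs with hq
      · rw [hq]
        exact le_of_eq SimpleGraph.dist_self
      · calc (vicsekGraph s T).dist (pvx s T v i) (pvx s T w j)
            ≤ (vicsekGraph s T).dist (pvx s T v i) (Sum.inl v) +
              (vicsekGraph s T).dist (Sum.inl v) (pvx s T w j) := hvg.dist_triangle
          _ ≤ 1 + (3 * T.dist v w + 1) :=
              Nat.add_le_add (dvg_adj_le (adj_ovx_pvx v i).symm) (hinl v)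
          _ = 3 * T.dist v w + 2 := by omega
  · refine lip_le_dist (f3 s T w j) ?_ (fun x y h => f3_lip hc w j h) (hvg.preconnected _ _)
    simp [f3, pvx]

-- ## Neighbors of `w` in a tree are at distance `D-1` or `D+1` from `u`

lemma tree_adj_dist_cases (hT : T.IsTree) {w d : V} (hwd : T.Adj w d) (u : V) :
    T.dist u d + 1 = T.dist u w ∨ T.dist u d = T.dist u w + 1 := by
  have hc := hT.isConnected
  have hdw : d ≠ w := hwd.ne'
  have hposdw : 0 < T.dist d w := (hc d w).pos_dist_of_ne hdw
  have hdw1 : T.dist d w ≤ 1 := by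
    simpa using SimpleGraph.dist_le (SimpleGraph.Walk.cons hwd.symm SimpleGraph.Walk.nil)
  obtain ⟨p, hp, hlp⟩ := exists_geodesic_path hc u w
  by_cases hd : d ∈ p.support
  · left
    have h1 : T.dist u d ≤ (p.takeUntil d hd).length := SimpleGraph.dist_le _
    have h2 : T.dist d w ≤ (p.dropUntil d hd).length := SimpleGraph.dist_le _
    have h3 : (p.takeUntil d hd).length + (p.dropUntil d hd).length = p.length := by
      have hx := congrArg SimpleGraph.Walk.length (p.take_spec hd)
      rw [SimpleGraph.Walk.length_append] at hx
      exact hx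
    have h4 : T.dist u w ≤ T.dist u d + T.dist d w := hc.dist_triangle
    omega
  · right
    have hp2 : (p.concat hwd).IsPath := by
      rw [← SimpleGraph.Walk.isPath_reverse_iff, SimpleGraph.Walk.reverse_concat]
      exact hp.reverse.cons (by simpa using hd)
    obtain ⟨r, hrp, hlr⟩ := exists_geodesic_path hc u d
    have heq := (hT.existsUnique_path u d).unique hp2 hrp
    have hlen := congrArg SimpleGraph.Walk.length heq
    rw [SimpleGraph.Walk.length_concat] at hlen
    omega

-- ## Summation over the neighbours of an original vertex

lemma sum_nbhd (w : V) (F : VicsekVert s T → ℕ) :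
    ∑ y ∈ (vicsekGraph s T).neighborFinset (Sum.inl w), F y
      = (∑ d ∈ T.neighborFinset w, if h : T.Adj w d then F (svx s T h) else 0)
        + ∑ j : Fin (s - T.degree w), F (pvx s T w j) := by
  classical
  have hN : (vicsekGraph s T).neighborFinset (Sum.inl w)
      = ((T.neighborFinset w).attach.image
           fun d => svx s T ((T.mem_neighborFinset w d.1).1 d.2))
        ∪ (Finset.univ.image fun j : Fin (s - T.degree w) => pvx s T w j) := by
    ext y
    simp only [SimpleGraph.mem_neighborFinset, adj_inl_iff, Finset.mem_union, Finset.mem_image,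
      Finset.mem_attach, true_and, Finset.mem_univ]
    constructor
    · rintro (⟨d, hd, rfl⟩ | ⟨i, rfl⟩)
      · exact Or.inl ⟨⟨d, (T.mem_neighborFinset w d).2 hd⟩, rfl⟩
      · exact Or.inr ⟨i, rfl⟩
    · rintro (⟨⟨d, hd⟩, rfl⟩ | ⟨j, rfl⟩)
      · exact Or.inl ⟨d, _, rfl⟩
      · exact Or.inr ⟨j, rfl⟩
  have hdisj : Disjoint
      ((T.neighborFinset w).attach.image
         fun d => svx s T ((T.mem_neighborFinset w d.1).1 d.2))
      (Finset.univ.image fun j : Fin (s - T.degree w) => pvx s T w j) := by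
    rw [Finset.disjoint_left]
    rintro y hy1 hy2
    simp only [Finset.mem_image, Finset.mem_attach, true_and, Finset.mem_univ] at hy1 hy2
    obtain ⟨d, rfl⟩ := hy1
    obtain ⟨j, hj⟩ := hy2
    simp [svx, pvx] at hj
  rw [hN, Finset.sum_union hdisj, Finset.sum_image, Finset.sum_image]
  · congr 1
    rw [← Finset.sum_attach (T.neighborFinset w)
      (fun d => if h : T.Adj w d then F (svx s T h) else 0)]
    apply Finset.sum_congr rfl
    intro d _
    rw [dif_pos ((T.mem_neighborFinset w d.1).1 d.2)]
  · intro a _ b _ hab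
    simpa [pvx] using hab
  · intro a _ b _ hab
    simp only [svx, Sum.inr.injEq, Sum.inl.injEq, Subtype.mk.injEq, Prod.mk.injEq] at hab
    exact Subtype.ext hab.2

lemma inner_sum (hT : T.IsTree) {u w : V} (hne : u ≠ w)
    (F : VicsekVert s T → ℕ) (P Q : ℕ)
    (hdegw : T.degree w ≤ s)
    (hpend : ∀ j, F (pvx s T w j) = P)
    (htow : ∀ d (h : T.Adj w d), T.dist u d + 1 = T.dist u w → F (svx s T h) = Q)
    (haway : ∀ d (h : T.Adj w d), T.dist u d = T.dist u w + 1 → F (svx s T h) = P) :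
    ∑ y ∈ (vicsekGraph s T).neighborFinset (Sum.inl w), F y = (s - 1) * P + Q := by
  classical
  have hc := hT.isConnected
  rw [sum_nbhd]
  obtain ⟨d₀, hd₀, htow₀⟩ := exists_toward hc hne
  have hdegpos : 1 ≤ T.degree w := by
    rw [← SimpleGraph.card_neighborFinset_eq_degree]
    exact Finset.card_pos.2 ⟨d₀, (T.mem_neighborFinset w d₀).2 hd₀⟩
  have hp : ∑ j : Fin (s - T.degree w), F (pvx s T w j) = (s - T.degree w) * P := by
    rw [Finset.sum_congr rfl fun j _ => hpend j]
    simp [Finset.sum_const, Finset.card_univ, Nat.mul_comm]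
  have hsub : (∑ d ∈ T.neighborFinset w, if h : T.Adj w d then F (svx s T h) else 0)
      = (T.degree w - 1) * P + Q := by
    rw [← Finset.sum_filter_add_sum_filter_not (T.neighborFinset w)
      (fun d => T.dist u d + 1 = T.dist u w)]
    have hft : (T.neighborFinset w).filter (fun d => T.dist u d + 1 = T.dist u w) = {d₀} := by
      ext d
      simp only [Finset.mem_filter, SimpleGraph.mem_neighborFinset, Finset.mem_singleton]
      constructor
      · rintro ⟨h1, h2⟩
        exact toward_unique hT hne h1 hd₀ h2 htow₀
      · rintro rfl
        exact ⟨hd₀, htow₀⟩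
    have h1 : (∑ d ∈ (T.neighborFinset w).filter
        (fun d => T.dist u d + 1 = T.dist u w),
        if h : T.Adj w d then F (svx s T h) else 0) = Q := by
      rw [hft, Finset.sum_singleton, dif_pos hd₀, htow d₀ hd₀ htow₀]
    have h2 : (∑ d ∈ (T.neighborFinset w).filter
        (fun d => ¬ T.dist u d + 1 = T.dist u w),
        if h : T.Adj w d then F (svx s T h) else 0)
        = (T.degree w - 1) * P := by
      have hcard : ((T.neighborFinset w).filter
          (fun d => ¬ T.dist u d + 1 = T.dist u w)).card = T.degree w - 1 := by
        have := Finset.card_filter_add_card_filter_not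
          (s := T.neighborFinset w) (p := fun d => T.dist u d + 1 = T.dist u w)
        rw [hft] at this
        simp only [Finset.card_singleton] at this
        rw [SimpleGraph.card_neighborFinset_eq_degree] at this
        omega
      have hvals : ∀ d ∈ (T.neighborFinset w).filter
          (fun d => ¬ T.dist u d + 1 = T.dist u w),
          (if h : T.Adj w d then F (svx s T h) else 0) = P := by
        intro d hd
        simp only [Finset.mem_filter, SimpleGraph.mem_neighborFinset] at hd
        obtain ⟨hadj, hnt⟩ := hd
        rcases tree_adj_dist_cases hT hadj u with hcase | hcase
        · exact absurd hcase hnt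
        · rw [dif_pos hadj, haway d hadj hcase]
      rw [Finset.sum_congr rfl hvals, Finset.sum_const, hcard, smul_eq_mul]
    rw [h1, h2]
    omega
  rw [hp, hsub]
  have e : (T.degree w - 1) * P + (s - T.degree w) * P = (s - 1) * P := by
    rw [← Nat.add_mul]
    congr 1
    omega
  omega

end VicsekProof

open VicsekProof in
/-- For distinct original vertices `u, w` of `T`, the sum over all
neighbors `x` of `u` and all neighbors `y` of `w` in `V_s(T)` of the distance between
`x` and `y` in `V_s(T)` equals `3·s²·d_T(u,w) + 2·s·(s-2)`. -/
theorem vicsekGraph_sum_dist_neighbors_pairs {V : Type} [Fintype V] [DecidableEq V]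
    (s : ℕ) (hs : 2 ≤ s) (T : SimpleGraph V) [DecidableRel T.Adj]
    (hT : T.IsTree) (hdeg : ∀ v : V, T.degree v ≤ s) :
    ∀ u w : V, u ≠ w →
      (∑ x ∈ (vicsekGraph s T).neighborFinset (Sum.inl u),
        ∑ y ∈ (vicsekGraph s T).neighborFinset (Sum.inl w),
          (vicsekGraph s T).dist x y) = 3 * s ^ 2 * T.dist u w + 2 * s * (s - 2) := by
  intro u w hne
  have hc := hT.isConnected
  have hD1 : 1 ≤ T.dist u w := hc.pos_dist_of_ne hne
  have hadj1 : ∀ {a b : V}, T.Adj a b → T.dist a b = 1 :=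
    fun h => SimpleGraph.dist_eq_one_iff_adj.2 h
  set D := T.dist u w with hDdef
  -- distances from a pendant of u
  have Vpp : ∀ (i : Fin (s - T.degree u)) (j : Fin (s - T.degree w)),
      (vicsekGraph s T).dist (pvx s T u i) (pvx s T w j) = 3 * D + 2 := by
    intro i j
    rw [dist_eq_f3 hc w j]
    simp only [f3, pvx]
    rw [if_neg]
    intro h
    exact hne (congrArg Sigma.fst h)
  have Vps_t : ∀ (i : Fin (s - T.degree u)) (d) (hwd : T.Adj w d),
      T.dist u d + 1 = D →
      (vicsekGraph s T).dist (pvx s T u i) (svx s T hwd) = 3 * D := by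
    intro i d hwd ht
    rw [dist_eq_f2 hc hwd]
    simp only [f2, pvx, gfun]
    omega
  have Vps_a : ∀ (i : Fin (s - T.degree u)) (d) (hwd : T.Adj w d),
      T.dist u d = D + 1 →
      (vicsekGraph s T).dist (pvx s T u i) (svx s T hwd) = 3 * D + 2 := by
    intro i d hwd ha
    rw [dist_eq_f2 hc hwd]
    simp only [f2, pvx, gfun]
    omega
  -- inner sum for a pendant of u
  have Spend : ∀ i : Fin (s - T.degree u),
      (∑ y ∈ (vicsekGraph s T).neighborFinset (Sum.inl w),
        (vicsekGraph s T).dist (pvx s T u i) y) = (s - 1) * (3 * D + 2) + 3 * D := by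
    intro i
    exact inner_sum hT hne _ (3 * D + 2) (3 * D) (hdeg w) (Vpp i) (Vps_t i) (Vps_a i)
  -- inner sum for a subdivision neighbour of u, b toward w
  have Ssub_t : ∀ (b) (hub : T.Adj u b), T.dist b w + 1 = D →
      (∑ y ∈ (vicsekGraph s T).neighborFinset (Sum.inl w),
        (vicsekGraph s T).dist (svx s T hub) y) = (s - 1) * (3 * D) + (3 * D - 2) := by
    intro b hub hbt
    refine inner_sum hT hne _ (3 * D) (3 * D - 2) (hdeg w) ?_ ?_ ?_
    · intro j
      rw [dist_eq_f3 hc w j]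
      simp only [f3, svx]
      omega
    · intro d hwd ht
      rw [dist_eq_f2 hc hwd]
      simp only [f2, svx, gfun]
      split_ifs with h1 h2
      · exact absurd (Prod.ext_iff.1 h1).1 hne
      · simp only [Prod.mk.injEq] at h2
        obtain ⟨h2a, h2b⟩ := h2
        rw [← h2a] at ht
        have h0 : T.dist u u = 0 := SimpleGraph.dist_self
        omega
      · have hD2 : 2 ≤ D := by
          rcases Nat.lt_or_ge D 2 with hlt | hge
          · exfalso
            have hb0 : T.dist b w = 0 := by omega
            have hd0 : T.dist u d = 0 := by omega
            have hbw : b = w := (hc b w).dist_eq_zero_iff.1 hb0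
            have hud : u = d := (hc u d).dist_eq_zero_iff.1 hd0
            exact h2 (Prod.ext_iff.2 ⟨hud, hbw⟩)
          · exact hge
        have hbd := both_toward_dist hT hub hwd hD2 hbt ht
        omega
    · intro d hwd ha
      rw [dist_eq_f2 hc hwd]
      simp only [f2, svx, gfun]
      split_ifs with h1 h2
      · exact absurd (Prod.ext_iff.1 h1).1 hne
      · simp only [Prod.mk.injEq] at h2
        obtain ⟨h2a, h2b⟩ := h2
        rw [← h2a] at ha
        have h0 : T.dist u u = 0 := SimpleGraph.dist_self
        omega
      · have hlip : T.dist u d ≤ T.dist b d + 1 := tdist_lip hc hub d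
        omega
  -- inner sum for a subdivision neighbour of u, b away from w
  have Ssub_a : ∀ (b) (hub : T.Adj u b), T.dist b w = D + 1 →
      (∑ y ∈ (vicsekGraph s T).neighborFinset (Sum.inl w),
        (vicsekGraph s T).dist (svx s T hub) y) = (s - 1) * (3 * D + 2) + 3 * D := by
    intro b hub hba
    refine inner_sum hT hne _ (3 * D + 2) (3 * D) (hdeg w) ?_ ?_ ?_
    · intro j
      rw [dist_eq_f3 hc w j]
      simp only [f3, svx]
      omega
    · intro d hwd ht
      rw [dist_eq_f2 hc hwd]
      simp only [f2, svx, gfun]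
      split_ifs with h1 h2
      · exact absurd (Prod.ext_iff.1 h1).1 hne
      · simp only [Prod.mk.injEq] at h2
        obtain ⟨h2a, h2b⟩ := h2
        rw [h2b] at hba
        have h0 : T.dist w w = 0 := SimpleGraph.dist_self
        omega
      · have htri : T.dist b w ≤ T.dist b d + T.dist d w := hc.dist_triangle
        have hdw : T.dist d w = 1 := hadj1 hwd.symm
        omega
    · intro d hwd ha
      rw [dist_eq_f2 hc hwd]
      simp only [f2, svx, gfun]
      split_ifs with h1 h2
      · exact absurd (Prod.ext_iff.1 h1).1 hne
      · simp only [Prod.mk.injEq] at h2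
        obtain ⟨h2a, h2b⟩ := h2
        rw [h2b] at hba
        have h0 : T.dist w w = 0 := SimpleGraph.dist_self
        omega
      · have hlip : T.dist u d ≤ T.dist b d + 1 := tdist_lip hc hub d
        omega
  -- outer sum
  have houter : (∑ x ∈ (vicsekGraph s T).neighborFinset (Sum.inl u),
      ∑ y ∈ (vicsekGraph s T).neighborFinset (Sum.inl w),
        (vicsekGraph s T).dist x y)
      = (s - 1) * ((s - 1) * (3 * D + 2) + 3 * D)
        + ((s - 1) * (3 * D) + (3 * D - 2)) := by
    refine inner_sum hT hne.symm
      (fun x => ∑ y ∈ (vicsekGraph s T).neighborFinset (Sum.inl w),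
        (vicsekGraph s T).dist x y)
      ((s - 1) * (3 * D + 2) + 3 * D) ((s - 1) * (3 * D) + (3 * D - 2)) (hdeg u) ?_ ?_ ?_
    · exact Spend
    · intro b hub hbt
      refine Ssub_t b hub ?_
      have e1 : T.dist w b = T.dist b w := SimpleGraph.dist_comm
      have e2 : T.dist w u = D := SimpleGraph.dist_comm
      omega
    · intro b hub hba
      refine Ssub_a b hub ?_
      have e1 : T.dist w b = T.dist b w := SimpleGraph.dist_comm
      have e2 : T.dist w u = D := SimpleGraph.dist_comm
      omega
  rw [houter]
  obtain ⟨σ, rfl⟩ : ∃ σ, s = σ + 2 := ⟨s - 2, by omega⟩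
  obtain ⟨D', hD'⟩ : ∃ D', D = D' + 1 := ⟨D - 1, by omega⟩
  rw [hD']
  have e1 : 3 * (D' + 1) - 2 = 3 * D' + 1 := by omega
  have e2 : σ + 2 - 1 = σ + 1 := by omega
  have e3 : σ + 2 - 2 = σ := by omega
  rw [e1, e2, e3]
  ring
end
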